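/- For the cycle graph C_n (n ≥ 3), there are exactly 2n almost-SHI-admissible partial orientations. -/

import Mathlib

open Finset SimpleGraph
open scoped Classical

variable {V : Type*} [Fintype V] [DecidableEq V]

/-- `O` is a partial orientation of `G`: a set of steps along edges of `G`,
containing at most one direction per edge. -/
def IsPO (G : SimpleGraph V) (O : Finset (V × V)) : Prop :=
  ∀ p ∈ O, G.Adj p.1 p.2 ∧ (p.2, p.1) ∉ O

/-- A total orientation orients every edge. -/
def IsTotalOn (G : SimpleGraph V) (O : Finset (V × V)) : Prop :=
  ∀ u v : V, G.Adj u v → (u, v) ∈ O ∨ (v, u) ∈ O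

/-- `O` contains a directed cycle of steps. -/
def HasDirCycle (O : Finset (V × V)) : Prop :=
  ∃ (k : ℕ) (c : Fin (k + 1) → V), 1 ≤ k ∧ Function.Injective c ∧
    ∀ i : Fin (k + 1), (c i, c (i + 1)) ∈ O

/-- An acyclic partial orientation. -/
def IsAcyclicPO (G : SimpleGraph V) (O : Finset (V × V)) : Prop :=
  IsPO G O ∧ ¬ HasDirCycle O

/-- Indegree of vertex `v` in the orientation `O`. -/
def indeg (O : Finset (V × V)) (v : V) : ℕ := (O.filter (fun p => p.2 = v)).card

/-- A potential cycle for `O`: a directed cycle of steps, each compatible with `O`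
(i.e. whose reversal is not in `O`). -/
def IsPotCycle (G : SimpleGraph V) (O : Finset (V × V)) {k : ℕ} (c : Fin (k + 1) → V) : Prop :=
  1 ≤ k ∧ Function.Injective c ∧
    ∀ i : Fin (k + 1), G.Adj (c i) (c (i + 1)) ∧ (c (i + 1), c i) ∉ O

/-- Score of a step compatible with `O`, with respect to the parameter list `a`. -/
def stepScore (a : V → V → ℝ) (O : Finset (V × V)) (p : V × V) : ℝ :=
  if p ∈ O then -(a p.2 p.1) else a p.1 p.2

/-- Score of a potential cycle. -/
def cycScore (a : V → V → ℝ) (O : Finset (V × V)) {k : ℕ} (c : Fin (k + 1) → V) : ℝ :=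
  ∑ i : Fin (k + 1), stepScore a O (c i, c (i + 1))

/-- `O` is `a`-admissible: every potential cycle has strictly positive score. -/
def IsAdmissible (G : SimpleGraph V) (a : V → V → ℝ) (O : Finset (V × V)) : Prop :=
  ∀ (k : ℕ) (c : Fin (k + 1) → V), IsPotCycle G O c → 0 < cycScore a O c

/-- `O` is almost-`a`-admissible: not admissible, but no potential cycle has negative score. -/
def IsAlmostAdmissible (G : SimpleGraph V) (a : V → V → ℝ) (O : Finset (V × V)) : Prop :=
  ¬ IsAdmissible G a O ∧
    ∀ (k : ℕ) (c : Fin (k + 1) → V), IsPotCycle G O c → 0 ≤ cycScore a O c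

/-- The parameter list condition: the central region of `Σ_G(A)` is nonempty. -/
def HasCentral (G : SimpleGraph V) (a : V → V → ℝ) : Prop :=
  ∃ x : V → ℝ, ∀ u v : V, G.Adj u v → x u - x v < a u v

/-- Number of edges of `G_•` from `i` to vertices outside `W` (including the edge to the sink). -/
noncomputable def dW (G : SimpleGraph V) (W : Finset V) (i : V) : ℕ :=
  1 + (Finset.univ.filter (fun u => u ∉ W ∧ G.Adj i u)).card

/-- `c` is a parking function of `G_•` with respect to the added sink `v₀`. -/
def IsPF (G : SimpleGraph V) (c : V → ℤ) : Prop :=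
  ∀ W : Finset V, W.Nonempty → ∃ i ∈ W, 0 ≤ c i ∧ c i < dW G W i

/-- The SHI parameter list on `Fin n`: `a_{ij} = 1` if `i < j` and `0` if `i > j`. -/
def shi (n : ℕ) : Fin n → Fin n → ℝ := fun i j => if (i : ℕ) < (j : ℕ) then 1 else 0


namespace AuxCycle

open Finset SimpleGraph

variable {m : ℕ}

lemma adj_iff (u v : Fin (m+3)) :
    (cycleGraph (m+3)).Adj u v ↔ v = u + 1 ∨ u = v + 1 := by
  rw [show cycleGraph (m+3) = cycleGraph ((m+1)+2) from rfl,
    cycleGraph_adj, sub_eq_iff_eq_add', sub_eq_iff_eq_add', or_comm]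

lemma fin_two_ne_zero {k : ℕ} (hk : 2 ≤ k) : (2 : Fin (k+1)) ≠ 0 := by
  have h2 : ((2 : Fin (k+1)) : ℕ) = 2 % (k+1) := rfl
  rw [Fin.ne_iff_vne, h2, Fin.val_zero, Nat.mod_eq_of_lt (by omega)]
  omega

lemma add_two_ne (v : Fin (m+3)) : v + 2 ≠ v := by
  rw [ne_eq, add_eq_left]
  exact fin_two_ne_zero (by omega)

lemma add_one_ne (v : Fin (m+3)) : v + 1 ≠ v := by
  rw [ne_eq, add_eq_left]
  exact one_ne_zero

/-- Sum of forward step scores. -/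
noncomputable def Sf (m : ℕ) (O : Finset (Fin (m+3) × Fin (m+3))) : ℝ :=
  ∑ v : Fin (m+3), stepScore (shi (m+3)) O (v, v+1)

/-- Sum of backward step scores. -/
noncomputable def Sb (m : ℕ) (O : Finset (Fin (m+3) × Fin (m+3))) : ℝ :=
  ∑ v : Fin (m+3), stepScore (shi (m+3)) O (v+1, v)

/-- No backward arcs. -/
def Pf (m : ℕ) (O : Finset (Fin (m+3) × Fin (m+3))) : Prop :=
  ∀ v : Fin (m+3), (v+1, v) ∉ O

/-- No forward arcs. -/
def Pb (m : ℕ) (O : Finset (Fin (m+3) × Fin (m+3))) : Prop :=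
  ∀ v : Fin (m+3), (v, v+1) ∉ O

lemma val_lt (v : Fin (m+3)) (h : v ≠ Fin.last (m+2)) : v.val < m + 2 := by
  rcases Nat.lt_or_ge v.val (m+2) with h' | h'
  · exact h'
  · exact absurd (Fin.ext (by have := v.isLt; simp [Fin.val_last]; omega)) h

lemma shi_succ (v : Fin (m+3)) :
    shi (m+3) v (v+1) = if v = Fin.last (m+2) then 0 else 1 := by
  by_cases h : v = Fin.last (m+2)
  · subst h; simp [shi, Fin.val_add_one]
  · simp only [shi, Fin.val_add_one, if_neg h]
    rw [if_pos (by omega)]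

lemma shi_succ' (v : Fin (m+3)) :
    shi (m+3) (v+1) v = if v = Fin.last (m+2) then 1 else 0 := by
  by_cases h : v = Fin.last (m+2)
  · subst h; simp [shi, Fin.val_add_one, Fin.val_last]
  · simp only [shi, Fin.val_add_one, if_neg h]
    rw [if_neg (by omega)]

lemma sum_ind_mem (T : Finset (Fin (m+3))) :
    ∑ v : Fin (m+3), (if v ∈ T then (1:ℝ) else 0) = T.card := by
  rw [Finset.sum_ite_mem, Finset.univ_inter, Finset.sum_const, nsmul_eq_mul, mul_one]

lemma sum_ind_eq (a : Fin (m+3)) :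
    ∑ v : Fin (m+3), (if v = a then (1:ℝ) else 0) = 1 := by
  rw [Finset.sum_ite_eq' Finset.univ a (fun _ => (1:ℝ))]
  simp

lemma Sf_eq (T : Finset (Fin (m+3))) :
    Sf m (T.image (fun i => (i, i+1))) = (Tᶜ.card : ℝ) - 1 := by
  have hmem : ∀ v : Fin (m+3), ((v, v+1) ∈ T.image (fun i => (i, i+1))) ↔ v ∈ T := by
    intro v
    simp only [Finset.mem_image, Prod.mk.injEq]
    constructor
    · rintro ⟨i, hi, rfl, -⟩; exact hi
    · exact fun hv => ⟨v, hv, rfl, rfl⟩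
  have key : ∀ v : Fin (m+3),
      stepScore (shi (m+3)) (T.image (fun i => (i, i+1))) (v, v+1)
        = (if v ∈ Tᶜ then (1:ℝ) else 0) - (if v = Fin.last (m+2) then (1:ℝ) else 0) := by
    intro v
    unfold stepScore
    rw [shi_succ, shi_succ']
    by_cases hv : v ∈ T
    · rw [if_pos ((hmem v).mpr hv), if_neg (show v ∉ Tᶜ by simpa using hv)]
      split_ifs <;> norm_num
    · rw [if_neg (fun h => hv ((hmem v).mp h)), if_pos (show v ∈ Tᶜ by simpa using hv)]
      split_ifs <;> norm_num
  unfold Sf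
  rw [Finset.sum_congr rfl (fun v _ => key v), Finset.sum_sub_distrib,
    sum_ind_mem, sum_ind_eq]

lemma Sb_eq (T : Finset (Fin (m+3))) :
    Sb m (T.image (fun i => (i+1, i))) = 1 - (T.card : ℝ) := by
  have hmem : ∀ v : Fin (m+3), ((v+1, v) ∈ T.image (fun i => (i+1, i))) ↔ v ∈ T := by
    intro v
    simp only [Finset.mem_image, Prod.mk.injEq]
    constructor
    · rintro ⟨i, hi, -, rfl⟩; exact hi
    · exact fun hv => ⟨v, hv, rfl, rfl⟩
  have key : ∀ v : Fin (m+3),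
      stepScore (shi (m+3)) (T.image (fun i => (i+1, i))) (v+1, v)
        = (if v = Fin.last (m+2) then (1:ℝ) else 0) - (if v ∈ T then (1:ℝ) else 0) := by
    intro v
    unfold stepScore
    rw [shi_succ, shi_succ']
    by_cases hv : v ∈ T
    · rw [if_pos ((hmem v).mpr hv), if_pos hv]
      split_ifs <;> norm_num
    · rw [if_neg (fun h => hv ((hmem v).mp h)), if_neg hv]
      split_ifs <;> norm_num
  unfold Sb
  rw [Finset.sum_congr rfl (fun v _ => key v), Finset.sum_sub_distrib,
    sum_ind_mem, sum_ind_eq]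

end AuxCycle
namespace AuxCycle

open Fin.CommRing in
lemma classify {m k : ℕ} {c : Fin (k+1) → Fin (m+3)} (h1 : 1 ≤ k)
    (hinj : Function.Injective c)
    (hadj : ∀ i, (SimpleGraph.cycleGraph (m+3)).Adj (c i) (c (i+1))) :
    k = 1 ∨ (k + 1 = m + 3 ∧ ((∀ i, c (i+1) = c i + 1) ∨ (∀ i, c (i+1) = c i - 1))) := by
  rcases eq_or_lt_of_le h1 with h | hk2
  · exact Or.inl h.symm
  right
  have h2 : (2 : Fin (k+1)) ≠ 0 := fin_two_ne_zero hk2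
  have step : ∀ i, c (i+1) = c i + 1 ∨ c (i+1) = c i - 1 := by
    intro i
    rcases (adj_iff _ _).mp (hadj i) with h | h
    · exact Or.inl h
    · right; rw [h, add_sub_cancel_right]
  have ne2 : ∀ i : Fin (k+1), i + 1 + 1 ≠ i := by
    intro i hi
    apply h2
    have : i + 2 = i := by calc i + 2 = i + 1 + 1 := by ring
        _ = i := hi
    rwa [add_eq_left] at this
  have prop : ∀ i, c (i+1) = c i + 1 → c (i+1+1) = c (i+1) + 1 := by
    intro i hi
    rcases step (i+1) with h | h
    · exact h
    · exfalso
      exact ne2 i (hinj (by rw [h, hi, add_sub_cancel_right]))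
  have propb : ∀ i, c (i+1) = c i - 1 → c (i+1+1) = c (i+1) - 1 := by
    intro i hi
    rcases step (i+1) with h | h
    · exfalso
      exact ne2 i (hinj (by rw [h, hi, sub_add_cancel]))
    · exact h
  have hle : k + 1 ≤ m + 3 := by
    have := Fintype.card_le_of_injective c hinj
    simpa using this
  have castsucc : ∀ j : ℕ, ((j+1 : ℕ) : Fin (k+1)) = (j : Fin (k+1)) + 1 := by
    intro j; push_cast; ring
  rcases step 0 with h0 | h0
  · have all : ∀ i, c (i+1) = c i + 1 := by
      have key : ∀ j : ℕ, c ((j : Fin (k+1)) + 1) = c (j : Fin (k+1)) + 1 := by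
        intro j
        induction j with
        | zero => simpa using h0
        | succ j ih => rw [castsucc]; exact prop _ ih
      intro i
      have := key i.val
      rwa [Fin.cast_val_eq_self] at this
    refine ⟨?_, Or.inl all⟩
    have disp : ∀ j : ℕ, c (j : Fin (k+1)) = c 0 + (j : Fin (m+3)) := by
      intro j
      induction j with
      | zero => simp
      | succ j ih => rw [castsucc, all, ih]; push_cast; ring
    have hc : ((k+1 : ℕ) : Fin (m+3)) = 0 := by
      have hd := disp (k+1)
      rw [Fin.natCast_self] at hd
      exact (left_eq_add.mp hd)
    have hdvd : (m+3) ∣ (k+1) := Fin.natCast_eq_zero.mp hc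
    have := Nat.le_of_dvd (by omega) hdvd
    omega
  · have all : ∀ i, c (i+1) = c i - 1 := by
      have key : ∀ j : ℕ, c ((j : Fin (k+1)) + 1) = c (j : Fin (k+1)) - 1 := by
        intro j
        induction j with
        | zero => simpa using h0
        | succ j ih => rw [castsucc]; exact propb _ ih
      intro i
      have := key i.val
      rwa [Fin.cast_val_eq_self] at this
    refine ⟨?_, Or.inr all⟩
    have disp : ∀ j : ℕ, c (j : Fin (k+1)) = c 0 - (j : Fin (m+3)) := by
      intro j
      induction j with
      | zero => simp
      | succ j ih => rw [castsucc, all, ih]; push_cast; ring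
    have hc : ((k+1 : ℕ) : Fin (m+3)) = 0 := by
      have hd := disp (k+1)
      rw [Fin.natCast_self] at hd
      have : c 0 - ((k+1 : ℕ) : Fin (m+3)) = c 0 := hd.symm
      rwa [sub_eq_self] at this
    have hdvd : (m+3) ∣ (k+1) := Fin.natCast_eq_zero.mp hc
    have := Nat.le_of_dvd (by omega) hdvd
    omega

end AuxCycle
namespace AuxCycle

open Finset SimpleGraph

variable {m : ℕ} {O : Finset (Fin (m+3) × Fin (m+3))}

lemma bij_of (k : ℕ) (hk : k + 1 = m + 3) {c : Fin (k+1) → Fin (m+3)}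
    (hinj : Function.Injective c) : Function.Bijective c :=
  (Fintype.bijective_iff_injective_and_card c).mpr ⟨hinj, by simp [hk]⟩

lemma score_eq_of_fwd {k : ℕ} {c : Fin (k+1) → Fin (m+3)} (hk : k + 1 = m + 3)
    (hinj : Function.Injective c) (hall : ∀ i, c (i+1) = c i + 1) :
    cycScore (shi (m+3)) O c = Sf m O := by
  exact Fintype.sum_bijective c (bij_of k hk hinj) _ _ (fun i => by rw [hall i])

lemma Pf_of_fwd {k : ℕ} {c : Fin (k+1) → Fin (m+3)} (hk : k + 1 = m + 3)
    (hinj : Function.Injective c) (hall : ∀ i, c (i+1) = c i + 1)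
    (hrev : ∀ i, (c (i+1), c i) ∉ O) : Pf m O := by
  intro v hv
  obtain ⟨i, rfl⟩ := (bij_of k hk hinj).surjective v
  exact hrev i (by rw [hall i]; exact hv)

lemma score_eq_of_bwd {k : ℕ} {c : Fin (k+1) → Fin (m+3)} (hk : k + 1 = m + 3)
    (hinj : Function.Injective c) (hall : ∀ i, c (i+1) = c i - 1) :
    cycScore (shi (m+3)) O c = Sb m O := by
  have e1 : cycScore (shi (m+3)) O c = ∑ v : Fin (m+3), stepScore (shi (m+3)) O (v, v - 1) :=
    Fintype.sum_bijective c (bij_of k hk hinj) _ _ (fun i => by rw [hall i])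
  rw [e1]
  refine (Fintype.sum_bijective (fun u : Fin (m+3) => u + 1)
    (Finite.injective_iff_bijective.mp (add_left_injective 1)) _ _ (fun u => ?_)).symm
  show stepScore (shi (m+3)) O (u+1, u) = stepScore (shi (m+3)) O (u+1, u+1-1)
  rw [add_sub_cancel_right]

lemma Pb_of_bwd {k : ℕ} {c : Fin (k+1) → Fin (m+3)} (hk : k + 1 = m + 3)
    (hinj : Function.Injective c) (hall : ∀ i, c (i+1) = c i - 1)
    (hrev : ∀ i, (c (i+1), c i) ∉ O) : Pb m O := by
  intro u hu
  obtain ⟨i, hi⟩ := (bij_of k hk hinj).surjective (u + 1)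
  have h1 : c (i+1) = u := by rw [hall i, hi, add_sub_cancel_right]
  exact hrev i (by rw [h1, hi]; exact hu)

lemma score_two {c : Fin 2 → Fin (m+3)} (hinj : Function.Injective c)
    (hrev : ∀ i : Fin 2, (c (i+1), c i) ∉ O) :
    cycScore (shi (m+3)) O c = 1 := by
  have h01 : (0 : Fin 2) + 1 = 1 := rfl
  have h10 : (1 : Fin 2) + 1 = 0 := rfl
  have hne : c 0 ≠ c 1 := fun h => absurd (hinj h) (by decide)
  have m0 : (c 0, c 1) ∉ O := by have := hrev 1; rwa [h10] at this
  have m1 : (c 1, c 0) ∉ O := by have := hrev 0; rwa [h01] at this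
  show (∑ i : Fin 2, stepScore (shi (m+3)) O (c i, c (i+1))) = 1
  rw [Fin.sum_univ_two, h01, h10]
  unfold stepScore shi
  simp only [if_neg m0, if_neg m1]
  have hne' : (c 0 : ℕ) ≠ (c 1 : ℕ) := fun h => hne (Fin.ext h)
  rcases lt_or_gt_of_ne hne' with h | h
  · rw [if_pos h, if_neg (by omega)]; norm_num
  · rw [if_neg (by omega), if_pos h]; norm_num

/-- The forward Hamiltonian potential cycle. -/
lemma fwd_pot (hPf : Pf m O) :
    IsPotCycle (cycleGraph (m+3)) O (id : Fin (m+2+1) → Fin (m+3)) := by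
  refine ⟨by omega, fun a b h => h, fun i => ⟨?_, hPf i⟩⟩
  exact (adj_iff i (i+1)).mpr (Or.inl rfl)

lemma fwd_score : cycScore (shi (m+3)) O (id : Fin (m+2+1) → Fin (m+3)) = Sf m O := rfl

/-- The backward Hamiltonian potential cycle. -/
lemma neg_succ (i : Fin (m+3)) : -(i+1) + 1 = -i := by
  rw [neg_add]; exact neg_add_cancel_right (-i) 1

lemma bwd_pot (hPb : Pb m O) :
    IsPotCycle (cycleGraph (m+3)) O (fun i : Fin (m+2+1) => -i) := by
  refine ⟨by omega, fun a b h => neg_injective h, fun i => ⟨?_, ?_⟩⟩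
  · exact (adj_iff _ _).mpr (Or.inr (neg_succ i).symm)
  · show (-(i+1), -i) ∉ O
    have := hPb (-(i+1))
    rwa [neg_succ i] at this

lemma bwd_score : cycScore (shi (m+3)) O (fun i : Fin (m+2+1) => -i) = Sb m O := by
  show (∑ i : Fin (m+3), stepScore (shi (m+3)) O (-i, -(i+1))) = Sb m O
  have hinj : Function.Injective (fun i : Fin (m+3) => -(i+1)) := by
    intro a b h
    have h2 : -(a+1) = -(b+1) := h
    have := neg_injective h2
    exact add_left_injective 1 this
  refine Fintype.sum_bijective (fun i : Fin (m+3) => -(i+1))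
    (Finite.injective_iff_bijective.mp hinj) _ _ (fun i => ?_)
  show stepScore (shi (m+3)) O (-i, -(i+1)) = stepScore (shi (m+3)) O (-(i+1)+1, -(i+1))
  rw [neg_succ i]

end AuxCycle
namespace AuxCycle

open Finset SimpleGraph

variable {m : ℕ} {O : Finset (Fin (m+3) × Fin (m+3))}

lemma char :
    IsAlmostAdmissible (cycleGraph (m+3)) (shi (m+3)) O ↔
      ((Pf m O → 0 ≤ Sf m O) ∧ (Pb m O → 0 ≤ Sb m O) ∧
        ((Pf m O ∧ Sf m O = 0) ∨ (Pb m O ∧ Sb m O = 0))) := by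
  constructor
  · rintro ⟨hna, hnn⟩
    have hA : Pf m O → 0 ≤ Sf m O := fun hPf => by
      have := hnn _ _ (fwd_pot hPf); rwa [fwd_score] at this
    have hB : Pb m O → 0 ≤ Sb m O := fun hPb => by
      have := hnn _ _ (bwd_pot hPb); rwa [bwd_score] at this
    refine ⟨hA, hB, ?_⟩
    unfold IsAdmissible at hna
    push_neg at hna
    obtain ⟨k, c, hpot, hscore⟩ := hna
    obtain ⟨h1, hinj, hsteps⟩ := hpot
    have hadj : ∀ i, (cycleGraph (m+3)).Adj (c i) (c (i+1)) := fun i => (hsteps i).1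
    have hrev : ∀ i, (c (i+1), c i) ∉ O := fun i => (hsteps i).2
    rcases classify h1 hinj hadj with rfl | ⟨hk, hdir | hdir⟩
    · rw [score_two hinj hrev] at hscore; norm_num at hscore
    · left
      have hPf := Pf_of_fwd hk hinj hdir hrev
      have he := score_eq_of_fwd (O := O) hk hinj hdir
      rw [he] at hscore
      exact ⟨hPf, le_antisymm hscore (hA hPf)⟩
    · right
      have hPb := Pb_of_bwd hk hinj hdir hrev
      have he := score_eq_of_bwd (O := O) hk hinj hdir
      rw [he] at hscore
      exact ⟨hPb, le_antisymm hscore (hB hPb)⟩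
  · rintro ⟨hA, hB, hC⟩
    constructor
    · intro had
      rcases hC with ⟨hPf, hSf⟩ | ⟨hPb, hSb⟩
      · have := had _ _ (fwd_pot hPf)
        rw [fwd_score, hSf] at this
        exact lt_irrefl _ this
      · have := had _ _ (bwd_pot hPb)
        rw [bwd_score, hSb] at this
        exact lt_irrefl _ this
    · intro k c hpot
      obtain ⟨h1, hinj, hsteps⟩ := hpot
      have hadj : ∀ i, (cycleGraph (m+3)).Adj (c i) (c (i+1)) := fun i => (hsteps i).1
      have hrev : ∀ i, (c (i+1), c i) ∉ O := fun i => (hsteps i).2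
      rcases classify h1 hinj hadj with rfl | ⟨hk, hdir | hdir⟩
      · rw [score_two hinj hrev]; norm_num
      · rw [score_eq_of_fwd hk hinj hdir]
        exact hA (Pf_of_fwd hk hinj hdir hrev)
      · rw [score_eq_of_bwd hk hinj hdir]
        exact hB (Pb_of_bwd hk hinj hdir hrev)

lemma fwd_form (hPO : IsPO (cycleGraph (m+3)) O) (hPf : Pf m O) :
    O = (O.image Prod.fst).image (fun i => (i, i+1)) := by
  have key : ∀ p ∈ O, p.2 = p.1 + 1 := by
    intro p hp
    rcases (adj_iff p.1 p.2).mp (hPO p hp).1 with h | h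
    · exact h
    · exfalso
      apply hPf p.2
      have hpp : ((p.2 + 1 : Fin (m+3)), p.2) = p := by rw [← h]
      rwa [hpp]
  ext p
  simp only [Finset.mem_image, Prod.mk.injEq]
  constructor
  · intro hp
    exact ⟨p.1, ⟨p, hp, rfl⟩, by rw [← key p hp]⟩
  · rintro ⟨i, ⟨q, hq, rfl⟩, hp⟩
    rw [← hp, ← key q hq]
    simpa using hq

lemma bwd_form (hPO : IsPO (cycleGraph (m+3)) O) (hPb : Pb m O) :
    O = (O.image Prod.snd).image (fun i => (i+1, i)) := by
  have key : ∀ p ∈ O, p.1 = p.2 + 1 := by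
    intro p hp
    rcases (adj_iff p.1 p.2).mp (hPO p hp).1 with h | h
    · exfalso
      apply hPb p.1
      have hpp : ((p.1 : Fin (m+3)), p.1 + 1) = p := by rw [← h]
      rwa [hpp]
    · exact h
  ext p
  simp only [Finset.mem_image, Prod.mk.injEq]
  constructor
  · intro hp
    exact ⟨p.2, ⟨p, hp, rfl⟩, by rw [← key p hp]⟩
  · rintro ⟨i, ⟨q, hq, rfl⟩, hp⟩
    rw [← hp, ← key q hq]
    simpa using hq

end AuxCycle
namespace AuxCycle

open Finset SimpleGraph

variable {m : ℕ} {O : Finset (Fin (m+3) × Fin (m+3))}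

/-- All edges oriented forward except the edge starting at `j`, which is blank. -/
def Ofwd (m : ℕ) (j : Fin (m+3)) : Finset (Fin (m+3) × Fin (m+3)) :=
  (Finset.univ.erase j).image (fun i => (i, i+1))

/-- Only the edge starting at `j` oriented, backward; all other edges blank. -/
def Orev (m : ℕ) (j : Fin (m+3)) : Finset (Fin (m+3) × Fin (m+3)) :=
  {(j+1, j)}

lemma Pf_Ofwd (j : Fin (m+3)) : Pf m (Ofwd m j) := by
  intro v hv
  simp only [Ofwd, Finset.mem_image, Finset.mem_erase, Prod.mk.injEq] at hv
  obtain ⟨i, hi, h1, h2⟩ := hv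
  have h3 : v + 1 + 1 = v := by rw [← h1]; exact h2
  exact add_two_ne v (by rw [show (2 : Fin (m+3)) = 1 + 1 from rfl, ← add_assoc]; exact h3)

lemma IsPO_Ofwd (j : Fin (m+3)) : IsPO (cycleGraph (m+3)) (Ofwd m j) := by
  intro p hp
  simp only [Ofwd, Finset.mem_image, Finset.mem_erase] at hp
  obtain ⟨i, hi, rfl⟩ := hp
  exact ⟨(adj_iff _ _).mpr (Or.inl rfl), Pf_Ofwd j i⟩

lemma compl_erase_univ (j : Fin (m+3)) : (Finset.univ.erase j)ᶜ = {j} := by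
  simp [Finset.compl_erase]

lemma Sf_Ofwd (j : Fin (m+3)) : Sf m (Ofwd m j) = 0 := by
  have h := Sf_eq (m := m) (Finset.univ.erase j)
  rw [compl_erase_univ, Finset.card_singleton] at h
  rw [show Ofwd m j = (Finset.univ.erase j).image (fun i => (i, i+1)) from rfl, h]
  norm_num

lemma notPb_Ofwd (j : Fin (m+3)) : ¬ Pb m (Ofwd m j) := by
  intro h
  apply h (j+1)
  simp only [Ofwd, Finset.mem_image, Finset.mem_erase]
  exact ⟨j+1, ⟨add_one_ne j, Finset.mem_univ _⟩, rfl⟩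

lemma Pb_Orev (j : Fin (m+3)) : Pb m (Orev m j) := by
  intro v hv
  simp only [Orev, Finset.mem_singleton, Prod.mk.injEq] at hv
  obtain ⟨h1, h2⟩ := hv
  have h3 : j + 1 + 1 = j := by rw [← h1]; exact h2
  exact add_two_ne j (by rw [show (2 : Fin (m+3)) = 1 + 1 from rfl, ← add_assoc]; exact h3)

lemma IsPO_Orev (j : Fin (m+3)) : IsPO (cycleGraph (m+3)) (Orev m j) := by
  intro p hp
  simp only [Orev, Finset.mem_singleton] at hp
  subst hp
  refine ⟨(adj_iff _ _).mpr (Or.inr rfl), ?_⟩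
  simp only [Orev, Finset.mem_singleton, Prod.mk.injEq]
  rintro ⟨h1, -⟩
  exact add_one_ne j h1.symm

lemma notPf_Orev (j : Fin (m+3)) : ¬ Pf m (Orev m j) := by
  intro h
  exact h j (by simp [Orev])

lemma Sb_Orev (j : Fin (m+3)) : Sb m (Orev m j) = 0 := by
  have h := Sb_eq (m := m) ({j} : Finset (Fin (m+3)))
  rw [Finset.image_singleton, Finset.card_singleton] at h
  rw [show Orev m j = ({(j+1, j)} : Finset _) from rfl, h]
  norm_num

lemma mem_iff :
    (IsPO (cycleGraph (m+3)) O ∧ IsAlmostAdmissible (cycleGraph (m+3)) (shi (m+3)) O) ↔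
      ((∃ j, O = Ofwd m j) ∨ (∃ j, O = Orev m j)) := by
  constructor
  · rintro ⟨hPO, halm⟩
    obtain ⟨hA, hB, hC⟩ := char.mp halm
    rcases hC with ⟨hPf, hSf⟩ | ⟨hPb, hSb⟩
    · left
      have hform := fwd_form hPO hPf
      set T := O.image Prod.fst with hT
      rw [hform, Sf_eq] at hSf
      have hcard : Tᶜ.card = 1 := by
        have : (Tᶜ.card : ℝ) = 1 := by linarith
        exact_mod_cast this
      obtain ⟨j, hj⟩ := Finset.card_eq_one.mp hcard
      refine ⟨j, ?_⟩
      rw [hform]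
      unfold Ofwd
      congr 1
      rw [← compl_compl T, hj, Finset.compl_singleton]
    · right
      have hform := bwd_form hPO hPb
      set T := O.image Prod.snd with hT
      rw [hform, Sb_eq] at hSb
      have hcard : T.card = 1 := by
        have : (T.card : ℝ) = 1 := by linarith
        exact_mod_cast this
      obtain ⟨j, hj⟩ := Finset.card_eq_one.mp hcard
      refine ⟨j, ?_⟩
      rw [hform, hj, Finset.image_singleton]
      rfl
  · rintro (⟨j, rfl⟩ | ⟨j, rfl⟩)
    · exact ⟨IsPO_Ofwd j, char.mpr ⟨fun _ => le_of_eq (Sf_Ofwd j).symm,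
        fun h => absurd h (notPb_Ofwd j), Or.inl ⟨Pf_Ofwd j, Sf_Ofwd j⟩⟩⟩
    · exact ⟨IsPO_Orev j, char.mpr ⟨fun h => absurd h (notPf_Orev j),
        fun _ => le_of_eq (Sb_Orev j).symm, Or.inr ⟨Pb_Orev j, Sb_Orev j⟩⟩⟩

lemma Ofwd_inj : Function.Injective (Ofwd m) := by
  intro j j' h
  by_contra hne
  have h1 : (j, j+1) ∈ Ofwd m j' := by
    simp only [Ofwd, Finset.mem_image, Finset.mem_erase]
    exact ⟨j, ⟨hne, Finset.mem_univ _⟩, rfl⟩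
  rw [← h] at h1
  simp only [Ofwd, Finset.mem_image, Finset.mem_erase, Prod.mk.injEq] at h1
  obtain ⟨i, ⟨hij, -⟩, h2, -⟩ := h1
  exact hij h2

lemma Orev_inj : Function.Injective (Orev m) := by
  intro j j' h
  have h2 : ((j+1 : Fin (m+3)), j) = (j'+1, j') := Finset.singleton_injective h
  exact congrArg Prod.snd h2

lemma disj : Disjoint (Finset.univ.image (Ofwd m)) (Finset.univ.image (Orev m)) := by
  rw [Finset.disjoint_left]
  rintro O hO hO'
  simp only [Finset.mem_image, Finset.mem_univ, true_and] at hO hO'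
  obtain ⟨j, rfl⟩ := hO
  obtain ⟨j', hj'⟩ := hO'
  have h1 : ((j+1 : Fin (m+3)), j+1+1) ∈ Ofwd m j := by
    simp only [Ofwd, Finset.mem_image, Finset.mem_erase]
    exact ⟨j+1, ⟨add_one_ne j, Finset.mem_univ _⟩, rfl⟩
  rw [← hj'] at h1
  simp only [Orev, Finset.mem_singleton, Prod.mk.injEq] at h1
  obtain ⟨h2, h3⟩ := h1
  have hj : j = j' := add_left_injective 1 h2
  apply add_two_ne j
  rw [show (2 : Fin (m+3)) = 1 + 1 from rfl, ← add_assoc, h3]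
  exact hj.symm

end AuxCycle


/-- For the cycle graph `Cₙ` (`n ≥ 3`) there are exactly `2n` almost-SHI-admissible partial
orientations. -/
theorem almost_shi_admissible_cycleGraph_card (n : ℕ) (hn : 3 ≤ n) :
    Set.ncard {O : Finset (Fin n × Fin n) | IsPO (SimpleGraph.cycleGraph n) O ∧
        IsAlmostAdmissible (SimpleGraph.cycleGraph n) (shi n) O} = 2 * n := by
  obtain ⟨m, rfl⟩ : ∃ m, n = m + 3 := ⟨n - 3, by omega⟩
  have hset : {O : Finset (Fin (m+3) × Fin (m+3)) | IsPO (SimpleGraph.cycleGraph (m+3)) O ∧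
      IsAlmostAdmissible (SimpleGraph.cycleGraph (m+3)) (shi (m+3)) O}
      = ↑((Finset.univ.image (AuxCycle.Ofwd m)) ∪ (Finset.univ.image (AuxCycle.Orev m))) := by
    ext O
    rw [Set.mem_setOf_eq, AuxCycle.mem_iff, Finset.coe_union, Set.mem_union]
    simp only [Finset.coe_image, Finset.coe_univ, Set.image_univ, Set.mem_range]
    simp [eq_comm]
  rw [hset, Set.ncard_coe_finset, Finset.card_union_of_disjoint AuxCycle.disj,
    Finset.card_image_of_injective _ AuxCycle.Ofwd_inj,
    Finset.card_image_of_injective _ AuxCycle.Orev_inj, Finset.card_univ, Fintype.card_fin]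
  ring
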